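/- Let B be a left cancellative left semi-brace with |B| = pq, where p > q are primes, and suppose |E| > 1. Then either E is a normal subgroup of (B,∘) (hence an ideal), or G = Ker(λ|_E). -/

import Mathlib

/-- A left cancellative left semi-brace: `(B,+)` is a left cancellative semigroup,
`(B,*)` is a group (the paper's `∘`, with neutral element `1`, the paper's `0`),
and `a * (b + c) = a * b + a * (a⁻¹ + c)`. -/
class LeftSemiBrace (B : Type*) extends Add B, Group B where
  add_assoc' : ∀ a b c : B, a + b + c = a + (b + c)
  add_left_cancel' : ∀ a b c : B, a + b = a + c → b = c
  compat : ∀ a b c : B, a * (b + c) = a * b + a * (a⁻¹ + c)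

namespace LSBAux

variable {B : Type*} [LeftSemiBrace B]

lemma aa (a b c : B) : a + b + c = a + (b + c) := LeftSemiBrace.add_assoc' a b c

lemma cancel {a b c : B} (h : a + b = a + c) : b = c := LeftSemiBrace.add_left_cancel' a b c h

lemma compat (a b c : B) : a * (b + c) = a * b + a * (a⁻¹ + c) := LeftSemiBrace.compat a b c

/-- The λ map. -/
def lam (a b : B) : B := a * (a⁻¹ + b)

lemma lam_def (a b : B) : lam a b = a * (a⁻¹ + b) := rfl

lemma one_add (c : B) : 1 + c = c := by
  have h := compat (1 : B) 1⁻¹ c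
  simp only [inv_one, one_mul, mul_one] at h
  exact (cancel h).symm

lemma lam_add (a b c : B) : lam a (b + c) = lam a b + lam a c := by
  rw [lam_def, lam_def, lam_def, ← aa, compat a (a⁻¹ + b) c]

lemma lam_mul (a b c : B) : lam (a * b) c = lam a (lam b c) := by
  have h : b * (b⁻¹ * a⁻¹ + c) = a⁻¹ + lam b c := by
    have := compat b (b⁻¹ * a⁻¹) c
    rwa [mul_inv_cancel_left] at this
  rw [lam_def, lam_def, mul_inv_rev, mul_assoc, h, lam_def]

lemma lam_one_apply (c : B) : lam 1 c = c := by
  rw [lam_def, inv_one, one_mul, one_add]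

lemma lam_inv_lam (a b : B) : lam a⁻¹ (lam a b) = b := by
  rw [← lam_mul, inv_mul_cancel, lam_one_apply]

lemma lam_lam_inv (a b : B) : lam a (lam a⁻¹ b) = b := by
  rw [← lam_mul, mul_inv_cancel, lam_one_apply]

lemma lam_inj (a : B) : Function.Injective (lam a) := by
  intro x y h
  have := congrArg (lam a⁻¹) h
  rwa [lam_inv_lam, lam_inv_lam] at this

lemma mul_eq_add_lam (a b : B) : a * b = a + lam a b := by
  conv_lhs => rw [← one_add b]
  rw [compat a 1 b, mul_one, lam_def]

lemma add_eq_mul_lam (a x : B) : a + x = a * lam a⁻¹ x := by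
  rw [mul_eq_add_lam, lam_lam_inv]

/-! ### Idempotents -/

lemma one_idem : (1 : B) + 1 = 1 := one_add 1

lemma lam_idem {e : B} (he : e + e = e) (a : B) : lam a e + lam a e = lam a e := by
  rw [← lam_add, he]

lemma lam_inv_self {e : B} (he : e + e = e) : lam e⁻¹ e = 1 := by
  rw [lam_def, inv_inv, he, inv_mul_cancel]

lemma idem_add_one {e : B} (he : e + e = e) : e + 1 = 1 := by
  have h1 : e + (e + 1) = e + 1 := by rw [← aa, he]
  exact cancel h1

lemma lam_inv_one {e : B} (he : e + e = e) : lam e⁻¹ 1 = e⁻¹ := by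
  rw [lam_def, inv_inv, idem_add_one he, mul_one]

lemma inv_idem {e : B} (he : e + e = e) : e⁻¹ + e⁻¹ = e⁻¹ := by
  have h1 : lam e⁻¹ (lam e e⁻¹) = e⁻¹ := lam_inv_lam e e⁻¹
  have h2 : lam e⁻¹ (1 : B) = e⁻¹ := lam_inv_one he
  have h3 : lam e e⁻¹ = 1 := lam_inj e⁻¹ (h1.trans h2.symm)
  rw [lam_def] at h3
  have := congrArg (fun x => e⁻¹ * x) h3
  simpa [← mul_assoc] using this

lemma add_idem {e f : B} (he : e + e = e) (hf : f + f = f) : (e + f) + (e + f) = e + f := by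
  have key : f + (e + f) = f := by
    rw [add_eq_mul_lam f (e + f), lam_add, lam_inv_self hf,
      idem_add_one (lam_idem he f⁻¹), mul_one]
  rw [aa, key]

lemma mul_idem {e f : B} (he : e + e = e) (hf : f + f = f) : e * f + e * f = e * f := by
  rw [mul_eq_add_lam]
  exact add_idem he (lam_idem hf e)

/-- The set of additive idempotents as a subgroup of `(B, ∘)`. -/
def Esub (B : Type*) [LeftSemiBrace B] : Subgroup B where
  carrier := {e : B | e + e = e}
  one_mem' := one_idem
  mul_mem' := fun he hf => mul_idem he hf
  inv_mem' := fun he => inv_idem he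

lemma mem_Esub {e : B} : e ∈ Esub B ↔ e + e = e := Iff.rfl

/-! ### The subgroup `G = B + 1` -/

lemma addone_of_mem {x : B} (h : ∃ c : B, c + 1 = x) : x + 1 = x := by
  obtain ⟨c, rfl⟩ := h
  rw [aa, one_idem]

lemma lam_inv_one_of_addone {g : B} (hg : g + 1 = g) : lam g⁻¹ 1 = 1 := by
  have h : g * lam g⁻¹ 1 = g * 1 := by
    rw [← add_eq_mul_lam, mul_one, hg]
  exact mul_left_cancel h

lemma lam_one_of_addone {g : B} (hg : g + 1 = g) : lam g 1 = 1 := by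
  have := lam_inv_one_of_addone hg
  calc lam g 1 = lam g (lam g⁻¹ 1) := by rw [this]
    _ = 1 := by rw [lam_lam_inv]

lemma addone_of_lam {a : B} (h : lam a⁻¹ 1 = 1) : a + 1 = a := by
  rw [add_eq_mul_lam, h, mul_one]

/-- `G = B + 1` as a subgroup of `(B, ∘)`. -/
def Gsub (B : Type*) [LeftSemiBrace B] : Subgroup B where
  carrier := {x : B | ∃ c : B, c + 1 = x}
  one_mem' := ⟨1, one_idem⟩
  mul_mem' := by
    rintro g h hg hh
    refine ⟨g * h, ?_⟩
    apply addone_of_lam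
    rw [mul_inv_rev, lam_mul, lam_inv_one_of_addone (addone_of_mem hg)]
    exact lam_inv_one_of_addone (addone_of_mem hh)
  inv_mem' := by
    rintro g hg
    refine ⟨g⁻¹, ?_⟩
    apply addone_of_lam
    rw [inv_inv]
    exact lam_one_of_addone (addone_of_mem hg)

lemma mem_Gsub {x : B} : x ∈ Gsub B ↔ ∃ c : B, c + 1 = x := Iff.rfl

/-! ### Decomposition `B ≃ G × E` -/

/-- The decomposition of `B` as `G * E`. -/
noncomputable def decomp : (Gsub B × Esub B) ≃ B where
  toFun p := (p.1 : B) * (p.2 : B)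
  invFun a := (⟨a + 1, ⟨a, rfl⟩⟩, ⟨(lam a⁻¹ 1)⁻¹, inv_idem (lam_idem one_idem a⁻¹)⟩)
  left_inv := by
    rintro ⟨⟨g, hg⟩, ⟨e, he⟩⟩
    have hg' : g + 1 = g := addone_of_mem hg
    have h1 : g * e + 1 = g := by
      rw [mul_eq_add_lam, aa, idem_add_one (lam_idem he g), hg']
    have h2 : lam (g * e)⁻¹ 1 = e⁻¹ := by
      rw [mul_inv_rev, lam_mul, lam_inv_one_of_addone hg', lam_inv_one he]
    simp only [Prod.mk.injEq, Subtype.mk.injEq]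
    exact ⟨Subtype.ext h1, Subtype.ext (show (lam (g * e)⁻¹ 1)⁻¹ = e by rw [h2, inv_inv])⟩
  right_inv := by
    intro a
    show (a + 1) * (lam a⁻¹ 1)⁻¹ = a
    rw [add_eq_mul_lam, mul_assoc, mul_inv_cancel, mul_one]

lemma card_eq : Nat.card B = Nat.card (Gsub B) * Nat.card (Esub B) := by
  rw [← Nat.card_congr (decomp (B := B)), Nat.card_prod]

/-! ### The action of `(B, ∘)` on `E` -/

/-- `λ_a` as a permutation of `E`. -/
def permE (a : B) : Equiv.Perm (Esub B) where
  toFun e := ⟨lam a e, lam_idem e.2 a⟩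
  invFun e := ⟨lam a⁻¹ e, lam_idem e.2 a⁻¹⟩
  left_inv e := Subtype.ext (lam_inv_lam a e)
  right_inv e := Subtype.ext (lam_lam_inv a e)

/-- The homomorphism `λ|_E : (B,∘) → Sym(E)`. -/
def lamHom : B →* Equiv.Perm (Esub B) where
  toFun := permE
  map_one' := by
    ext e
    exact lam_one_apply (e : B)
  map_mul' a b := by
    ext e
    exact lam_mul a b (e : B)

lemma mem_ker_iff {b : B} :
    b ∈ lamHom.ker ↔ ∀ e : B, e + e = e → b * (b⁻¹ + e) = e := by
  constructor
  · intro h e he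
    have := congrArg (Subtype.val) (Equiv.ext_iff.mp h ⟨e, he⟩)
    exact this
  · intro h
    ext e
    exact h e e.2

lemma ker_le_Gsub : (lamHom (B := B)).ker ≤ Gsub B := by
  intro b hb
  have hb' : b⁻¹ ∈ (lamHom (B := B)).ker := inv_mem hb
  have h1 : lam b⁻¹ (1 : B) = 1 := mem_ker_iff.mp hb' 1 one_idem
  exact ⟨b, addone_of_lam h1⟩

end LSBAux

open LSBAux in
/-- For a left cancellative left semi-brace of size `pq` with `p > q` primes and `|E| > 1`,
either `E` is a normal subgroup of `(B,∘)` (hence an ideal) or `G = Ker(λ|_E)`. -/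
theorem stmt14 (B : Type*) [LeftSemiBrace B] (p q : ℕ) (hp : p.Prime) (hq : q.Prime)
    (hpq : q < p) (hcard : Nat.card B = p * q)
    (hE : 1 < Nat.card {e : B | e + e = e}) :
    (∃ H : Subgroup B, (H : Set B) = {e : B | e + e = e} ∧ H.Normal) ∨
    {b : B | ∀ e : B, e + e = e → b * (b⁻¹ + e) = e} = {x : B | ∃ c : B, c + 1 = x} := by
  have hB : Finite B := by
    have h0 : 0 < Nat.card B := by
      rw [hcard]; exact Nat.mul_pos hp.pos hq.pos
    exact (Nat.card_pos_iff.mp h0).2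
  have hpq0 : 0 < p * q := Nat.mul_pos hp.pos hq.pos
  have hpne : p ≠ q := hpq.ne'
  have hEcard : Nat.card (Esub B) = Nat.card {e : B | e + e = e} := rfl
  have hdvd : Nat.card (Esub B) ∣ p * q := hcard ▸ Subgroup.card_subgroup_dvd_card (Esub B)
  have hE' : 1 < Nat.card (Esub B) := hE
  have hE1 : Nat.card (Esub B) ≠ 1 := by omega
  -- classify the divisor
  have hcases : Nat.card (Esub B) = p ∨ Nat.card (Esub B) = q ∨ Nat.card (Esub B) = p * q := by
    by_cases hpd : p ∣ Nat.card (Esub B)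
    · obtain ⟨k, hk⟩ := hpd
      have hkq : k ∣ q := by
        have : p * k ∣ p * q := hk ▸ hdvd
        exact (mul_dvd_mul_iff_left hp.pos.ne').mp this
      rcases (Nat.dvd_prime hq).mp hkq with h1 | h1
      · left; rw [hk, h1, mul_one]
      · right; right; rw [hk, h1]
    · have hco : Nat.Coprime (Nat.card (Esub B)) p :=
        (hp.coprime_iff_not_dvd.mpr hpd).symm
      have hq' : Nat.card (Esub B) ∣ q := by
        rw [mul_comm] at hdvd
        exact hco.dvd_of_dvd_mul_right hdvd
      rcases (Nat.dvd_prime hq).mp hq' with h1 | h1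
      · exact absurd h1 hE1
      · exact Or.inr (Or.inl h1)
  rcases hcases with hcase | hcase | hcase
  · -- |E| = p : E is a normal Sylow p-subgroup
    left
    haveI : Fact p.Prime := ⟨hp⟩
    have hfact : (Nat.card B).factorization p = 1 := by
      rw [hcard, Nat.factorization_mul hp.pos.ne' hq.pos.ne', Finsupp.add_apply,
        hp.factorization, Finsupp.single_eq_same,
        Nat.factorization_eq_zero_of_not_dvd (fun h => hpne ((Nat.prime_dvd_prime_iff_eq hp hq).mp h))]
    have hcard' : Nat.card (Esub B) = p ^ (Nat.card B).factorization p := by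
      rw [hfact, pow_one, hcase]
    let P : Sylow p B := Sylow.ofCard (Esub B) hcard'
    have hPcoe : (P : Subgroup B) = Esub B := Sylow.coe_ofCard _ _
    -- index of P is q
    have hindexE : (Esub B).index = q := by
      have h := Subgroup.card_mul_index (Esub B)
      rw [hcase, hcard] at h
      exact Nat.eq_of_mul_eq_mul_left hp.pos h
    have hindex : (P : Subgroup B).index = q := by rw [hPcoe]; exact hindexE
    -- number of Sylow p-subgroups is 1
    have hnum : Nat.card (Sylow p B) = 1 := by
      have h1 : Nat.card (Sylow p B) ∣ q := hindex ▸ P.card_dvd_index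
      have h2 : Nat.card (Sylow p B) ≡ 1 [MOD p] := card_sylow_modEq_one p B
      rcases (Nat.dvd_prime hq).mp h1 with h | h
      · exact h
      · exfalso
        rw [h] at h2
        have h3 : q % p = 1 % p := h2
        rw [Nat.mod_eq_of_lt hpq, Nat.mod_eq_of_lt hp.one_lt] at h3
        have := hq.two_le
        omega
    have hsub : Subsingleton (Sylow p B) := (Nat.card_eq_one_iff_unique.mp hnum).1
    have hnorm : (P : Subgroup B).Normal := by
      rw [← Subgroup.normalizer_eq_top_iff]
      rw [eq_top_iff]
      intro g _
      refine Sylow.smul_eq_iff_mem_normalizer.mp ?_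
      exact Subsingleton.elim _ _
    rw [hPcoe] at hnorm
    exact ⟨Esub B, rfl, hnorm⟩
  · -- |E| = q : kernel argument, G = ker(λ|_E)
    right
    haveI : Finite (Esub B) := Subtype.finite
    have hGcard : Nat.card (Gsub B) = p := by
      have h := card_eq (B := B)
      rw [hcard, hcase] at h
      exact Nat.eq_of_mul_eq_mul_right hq.pos h.symm
    set K := (lamHom (B := B)).ker with hK
    have hKG : K ≤ Gsub B := ker_le_Gsub
    have hKdvd : Nat.card K ∣ p := by
      have := Subgroup.card_dvd_of_le hKG
      rwa [hGcard] at this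
    -- card (B ⧸ K) divides q!
    have hquot : Nat.card (B ⧸ K) ∣ Nat.factorial q := by
      have hinj : Function.Injective (QuotientGroup.kerLift (lamHom (B := B))) :=
        QuotientGroup.kerLift_injective _
      have h1 : Nat.card (B ⧸ K) ∣ Nat.card (Equiv.Perm (Esub B)) :=
        Subgroup.card_dvd_of_injective _ hinj
      haveI : DecidableEq (Esub B) := Classical.decEq _
      haveI : Fintype (Esub B) := Fintype.ofFinite _
      have h2 : Nat.card (Equiv.Perm (Esub B)) = Nat.factorial q := by
        rw [Nat.card_eq_fintype_card, Fintype.card_perm, ← Nat.card_eq_fintype_card, hcase]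
      rwa [h2] at h1
    have hpq_ndvd : ¬ p ∣ Nat.factorial q := fun h => absurd (hp.dvd_factorial.mp h) (by omega)
    have hpK : p ∣ Nat.card K := by
      have hprod : Nat.card (B ⧸ K) * Nat.card K = p * q := by
        rw [← Subgroup.card_eq_card_quotient_mul_card_subgroup, hcard]
      have hpdvd : p ∣ Nat.card (B ⧸ K) * Nat.card K := hprod ▸ Dvd.intro q rfl
      rcases hp.dvd_mul.mp hpdvd with h | h
      · exact absurd (dvd_trans h hquot) hpq_ndvd
      · exact h
    have hKcard : Nat.card K = p := Nat.dvd_antisymm hKdvd hpK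
    have hKeq : K = Gsub B := by
      apply Subgroup.eq_of_le_of_card_ge hKG
      rw [hGcard, hKcard]
    have hset : (K : Set B) = (Gsub B : Set B) := by rw [hKeq]
    have hset1 : (K : Set B) = {b : B | ∀ e : B, e + e = e → b * (b⁻¹ + e) = e} := by
      ext b
      exact mem_ker_iff
    rw [← hset1, hset]
    rfl
  · -- |E| = pq : E = B is trivially normal
    left
    have htop : Esub B = ⊤ := by
      apply Subgroup.eq_top_of_card_eq
      rw [hcase, hcard]
    exact ⟨Esub B, rfl, htop ▸ (inferInstance : (⊤ : Subgroup B).Normal)⟩
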